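/- Assume the Baker–Harman–Pintz hypothesis. Then for every real number k ≥ 40/19 there exists a constant N such that for every integer n > N there is a prime p with (n-1)^k < p < n^k, where the powers are real powers. -/

import Mathlib

/-- Baker–Harman–Pintz hypothesis: there is `x₀` such that for all real
`x ≥ x₀` the interval `[x - x^(21/40), x]` contains a prime. -/
def BHP : Prop :=
  ∃ x₀ : ℝ, ∀ x : ℝ, x₀ ≤ x →
    ∃ p : ℕ, p.Prime ∧ x - x ^ ((21 : ℝ) / 40) ≤ (p : ℝ) ∧ (p : ℝ) ≤ x

/-- Exponential theorem: assuming BHP, for every real `k ≥ 40/19` there is a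
constant `N` such that every integer `n > N` admits a prime `p` with
`(n-1)^k < p < n^k` (real powers). -/
theorem exponential_theorem (hBHP : BHP) :
    ∀ k : ℝ, (40 : ℝ) / 19 ≤ k → ∃ N : ℕ, ∀ n : ℕ, N < n →
      ∃ p : ℕ, p.Prime ∧ ((n : ℝ) - 1) ^ k < (p : ℝ) ∧ (p : ℝ) < (n : ℝ) ^ k := by
  intro k hk
  obtain ⟨x₀, hx₀⟩ := hBHP
  have hk1 : (1:ℝ) ≤ k := by linarith
  set a : ℝ := 21 * k / 40 with ha_def
  have ha1 : (1:ℝ) ≤ a := by rw [ha_def]; linarith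
  have hak : a ≤ k - 1 := by rw [ha_def]; linarith
  refine ⟨⌈max x₀ (4*a)⌉₊ + 2, fun n hn => ?_⟩
  have hm3 : (⌈max x₀ (4*a)⌉₊ : ℝ) + 3 ≤ (n:ℝ) := by
    have h : ⌈max x₀ (4*a)⌉₊ + 3 ≤ n := hn
    exact_mod_cast h
  have hmax : max x₀ (4*a) ≤ (⌈max x₀ (4*a)⌉₊ : ℝ) := Nat.le_ceil _
  set m : ℝ := (n:ℝ) with hm_def
  have hx₀m : x₀ + 3 ≤ m := by
    have := le_max_left x₀ (4*a); linarith
  have h4a : 4*a + 3 ≤ m := by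
    have := le_max_right x₀ (4*a); linarith
  have hm2 : (2:ℝ) ≤ m := by linarith
  have hm1 : (1:ℝ) ≤ m - 1 := by linarith
  have hm0 : (0:ℝ) < m := by linarith
  have hm10 : (0:ℝ) < m - 1 := by linarith
  -- m ≤ m ^ k
  have hmk : m ≤ m ^ k := by
    nth_rewrite 1 [← Real.rpow_one m]
    exact Real.rpow_le_rpow_of_exponent_le (by linarith) hk1
  -- Bernoulli at 1/(m-1):  m^k ≥ (m-1)^k + k * (m-1)^(k-1)
  have hpow_pos : (0:ℝ) < (m-1) ^ k := Real.rpow_pos_of_pos hm10 k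
  have hbern1 : (m-1) ^ k + k * (m-1) ^ (k-1) ≤ m ^ k := by
    have hb := one_add_mul_self_le_rpow_one_add (s := 1/(m-1))
      (by have := one_div_nonneg.mpr hm10.le; linarith : (-1:ℝ) ≤ 1/(m-1)) hk1
    have heq : ((1 : ℝ) + 1/(m-1)) = m / (m-1) := by
      field_simp; ring
    rw [heq, Real.div_rpow hm0.le hm10.le] at hb
    have hb2 : (1 + k * (1/(m-1))) * (m-1)^k ≤ m ^ k := by
      rw [le_div_iff₀ hpow_pos] at hb
      exact hb
    have hsub : (m-1) ^ (k-1) = (m-1)^k / (m-1) := Real.rpow_sub_one hm10.ne' k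
    rw [hsub]
    calc (m-1)^k + k * ((m-1)^k/(m-1)) = (1 + k * (1/(m-1))) * (m-1)^k := by
          field_simp
      _ ≤ m ^ k := hb2
  -- (m-1)^a ≤ (m-1)^(k-1)
  have hstep2 : (m-1) ^ a ≤ (m-1) ^ (k-1) :=
    Real.rpow_le_rpow_of_exponent_le hm1 hak
  -- (1 - a/m) * m^a ≤ (m-1)^a
  have hstep3 : (1 - a/m) * m ^ a ≤ (m-1) ^ a := by
    have hb := one_add_mul_self_le_rpow_one_add (s := -(1/m))
      (by have h1 : 1/m ≤ 1 := by rw [div_le_one hm0]; linarith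
          linarith : (-1:ℝ) ≤ -(1/m)) ha1
    have heq : ((1:ℝ) + -(1/m)) = (m-1)/m := by field_simp; ring
    rw [heq, Real.div_rpow hm10.le hm0.le] at hb
    have hmapos : (0:ℝ) < m ^ a := Real.rpow_pos_of_pos hm0 a
    rw [le_div_iff₀ hmapos] at hb
    calc (1 - a/m) * m ^ a = (1 + a * -(1/m)) * m ^ a := by ring
      _ ≤ (m-1)^a := hb
  -- m ≤ m^a
  have hma : m ≤ m ^ a := by
    nth_rewrite 1 [← Real.rpow_one m]
    exact Real.rpow_le_rpow_of_exponent_le (by linarith) ha1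
  have hmapos : (0:ℝ) < m ^ a := Real.rpow_pos_of_pos hm0 a
  -- main: (m-1)^k + m^a + 1 < m^k
  have hmain : (m-1) ^ k + m ^ a + 1 < m ^ k := by
    have h1 : k * (1 - a/m) * m ^ a ≤ k * (m-1)^(k-1) := by
      have := mul_le_mul_of_nonneg_left (hstep3.trans hstep2) (by linarith : (0:ℝ) ≤ k)
      linarith [this]
    have h2 : (30:ℝ)/19 * m ^ a ≤ k * (1 - a/m) * m ^ a := by
      have ham : a / m ≤ 1/4 := by
        rw [div_le_iff₀ hm0]; linarith
      have : (30:ℝ)/19 ≤ k * (1 - a/m) := by nlinarith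
      exact mul_le_mul_of_nonneg_right this hmapos.le
    have h3 : m ^ a + 1 < (30:ℝ)/19 * m ^ a := by nlinarith
    linarith
  set x : ℝ := m ^ k - 1 with hx_def
  have hx0 : (0:ℝ) ≤ x := by rw [hx_def]; linarith
  obtain ⟨p, hp, hlow, hhigh⟩ := hx₀ x (by rw [hx_def]; nlinarith)
  refine ⟨p, hp, ?_, by rw [hx_def] at hhigh; linarith⟩
  -- lower bound: x^(21/40) ≤ m^a
  have hxa : x ^ ((21:ℝ)/40) ≤ m ^ a := by
    have h1 : x ^ ((21:ℝ)/40) ≤ (m ^ k) ^ ((21:ℝ)/40) := by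
      apply Real.rpow_le_rpow hx0 (by rw [hx_def]; linarith) (by norm_num)
    have h2 : (m ^ k) ^ ((21:ℝ)/40) = m ^ a := by
      rw [← Real.rpow_mul hm0.le, ha_def]
      congr 1; ring
    linarith [h1, h2.le]
  have : (m-1) ^ k < x - x ^ ((21:ℝ)/40) := by rw [hx_def]; linarith
  linarith
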